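/- Let A be an abelian group of finite exponent n (i.e., n•a = 0 for all a ∈ A, with n > 0). Then the intersection of all finite-index subgroups of A is trivial. -/

import Mathlib

/-- Let A be an abelian group of finite exponent n (n•a = 0 for all a, n > 0).
Then the intersection of all finite-index subgroups of A is trivial. -/
theorem stmt0 (A : Type*) [AddCommGroup A] (n : ℕ) (hn : 0 < n)
    (h : ∀ a : A, n • a = 0) :
    (⨅ (H : AddSubgroup A) (_ : H.FiniteIndex), H) = ⊥ := by
  rw [eq_bot_iff]
  intro a ha
  rw [AddSubgroup.mem_bot]
  by_contra hne
  obtain ⟨c, hc⟩ := CharacterModule.exists_character_apply_ne_zero_of_ne_zero hne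
  haveI : Fact ((0:ℚ) < 1) := ⟨zero_lt_one⟩
  -- the range of c lies in the n-torsion of ℚ/ℤ, which is finite
  have hT : {u : AddCircle (1:ℚ) | n • u = 0}.Finite := by
    have hsub : {u : AddCircle (1:ℚ) | n • u = 0} ⊆
        ⋃ d ∈ n.divisors, {u : AddCircle (1:ℚ) | addOrderOf u = d} := by
      intro u hu
      simp only [Set.mem_iUnion]
      exact ⟨addOrderOf u, Nat.mem_divisors.2
        ⟨addOrderOf_dvd_of_nsmul_eq_zero hu, hn.ne'⟩, rfl⟩
    refine Set.Finite.subset (Set.Finite.biUnion n.divisors.finite_toSet fun d hd => ?_) hsub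
    exact AddCircle.finite_setOfPred_addOrderOf_eq (p := (1:ℚ)) (Nat.pos_of_mem_divisors hd)
  have hrange : (c.range : Set (AddCircle (1:ℚ))) ⊆ {u | n • u = 0} := by
    rintro _ ⟨x, rfl⟩
    show n • c x = 0
    rw [← map_nsmul, h, map_zero]
  haveI : Finite c.range := (hT.subset hrange).to_subtype
  haveI : Finite (A ⧸ c.ker) :=
    Finite.of_equiv _ (QuotientAddGroup.quotientKerEquivRange c).symm.toEquiv
  haveI : c.ker.FiniteIndex := AddSubgroup.finiteIndex_of_finite_quotient
  have := AddSubgroup.mem_iInf.1 ha c.ker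
  rw [AddSubgroup.mem_iInf] at this
  exact hc (this ‹c.ker.FiniteIndex›)
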